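/- arXiv:1306.4649 — 2 statements merged into one kernel-verified Lean document; each statement's English description precedes it below -/
import Mathlib

section
/- Let A be an n×n real symmetric positive definite matrix and B an (n−1)×(n−1) principal submatrix of A whose eigenvalues interlace those of A. Then the smallest eigenvalue of A satisfies λ_n(A) ≤ 1/(tr(A⁻¹) − tr(B⁻¹)). -/
open Matrix

lemma rayleigh_min {m : Type*} [Fintype m] [DecidableEq m] [Nonempty m]
    {A : Matrix m m ℝ} (hA : A.IsHermitian) (v : m → ℝ) :
    (⨅ j, hA.eigenvalues j) * (v ⬝ᵥ v) ≤ v ⬝ᵥ A.mulVec v := by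
  set U : Matrix m m ℝ := (Matrix.IsHermitian.eigenvectorUnitary hA : Matrix m m ℝ) with hU
  have hstar : star U = Uᵀ := rfl
  have hUU : U * Uᵀ = 1 := by
    rw [← hstar]
    exact (Matrix.mem_unitaryGroup_iff).mp (Matrix.IsHermitian.eigenvectorUnitary hA).2
  set w : m → ℝ := Uᵀ.mulVec v with hw
  have h1 : v ⬝ᵥ A.mulVec v = ∑ k, hA.eigenvalues k * (w k * w k) := by
    conv_lhs => rw [hA.spectral_theorem]
    rw [Unitary.conjStarAlgAut_apply, ← hU, hstar, ← Matrix.mulVec_mulVec, ← Matrix.mulVec_mulVec, Matrix.dotProduct_mulVec,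
      ← Matrix.mulVec_transpose]
    simp [dotProduct, Matrix.mulVec_diagonal, ← hw]
    exact Finset.sum_congr rfl fun k _ => by ring
  have h2 : v ⬝ᵥ v = w ⬝ᵥ w := by
    rw [hw, dotProduct_comm, Matrix.dotProduct_mulVec, ← Matrix.mulVec_transpose,
      Matrix.transpose_transpose, Matrix.mulVec_mulVec, hUU, Matrix.one_mulVec]
  rw [h1, h2, dotProduct, Finset.mul_sum]
  refine Finset.sum_le_sum fun k _ => ?_
  have h3 : (⨅ j, hA.eigenvalues j) ≤ hA.eigenvalues k :=
    ciInf_le (Finite.bddBelow_range _) k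
  exact mul_le_mul_of_nonneg_right h3 (mul_self_nonneg _)

/-- If `A` is positive definite and `B` is a principal submatrix obtained by deleting a row and
the corresponding column, then the smallest eigenvalue of `A` is at most
`1 / (tr A⁻¹ - tr B⁻¹)`. -/
theorem min_eigenvalue_le_inv_trace_diff {n : ℕ}
    (A : Matrix (Fin (n + 1)) (Fin (n + 1)) ℝ) (hHerm : A.IsHermitian) (hA : A.PosDef)
    (i : Fin (n + 1)) (B : Matrix (Fin n) (Fin n) ℝ)
    (hB : B = A.submatrix i.succAbove i.succAbove) (hBpd : B.PosDef) :
    (⨅ j, hHerm.eigenvalues j) ≤ 1 / (A⁻¹.trace - B⁻¹.trace) := by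
  have hAsymm : ∀ k l, A k l = A l k := by
    intro k l
    have := congrFun (congrFun hHerm.symm k) l
    simpa [Matrix.conjTranspose_apply] using this
  set C : Matrix (Fin n) (Fin n) ℝ := B⁻¹ with hC
  have hBC : B * C = 1 := Matrix.mul_nonsing_inv _ hBpd.det_pos.ne'.isUnit
  have hCB : C * B = 1 := Matrix.nonsing_inv_mul _ hBpd.det_pos.ne'.isUnit
  set b : Fin n → ℝ := fun j => A i (i.succAbove j) with hb
  set w : Fin n → ℝ := C.mulVec b with hw
  set v : Fin (n + 1) → ℝ := i.insertNth 1 (fun j => - w j) with hv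
  have hvi : v i = 1 := Fin.insertNth_apply_same i 1 _
  have hvs : ∀ j, v (i.succAbove j) = - w j := fun j => Fin.insertNth_apply_succAbove i 1 _ j
  set s : ℝ := A i i - b ⬝ᵥ w with hs
  have hBw : B.mulVec w = b := by
    rw [hw, Matrix.mulVec_mulVec, hBC, Matrix.one_mulVec]
  -- A *ᵥ v
  have hAvi : A.mulVec v i = s := by
    rw [Matrix.mulVec, dotProduct, Fin.sum_univ_succAbove _ i]
    simp only [hvi, hvs, mul_one, mul_neg]
    rw [Finset.sum_neg_distrib, ← sub_eq_add_neg]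
    rfl
  have hAvs : ∀ k, A.mulVec v (i.succAbove k) = 0 := by
    intro k
    rw [Matrix.mulVec, dotProduct, Fin.sum_univ_succAbove _ i]
    simp only [hvi, hvs, mul_one, mul_neg]
    have h1 : ∀ j, A (i.succAbove k) (i.succAbove j) = B k j := by
      intro j; rw [hB]; rfl
    have h2 : A (i.succAbove k) i = b k := by rw [hb, hAsymm]
    have h3 : ∑ j, B k j * w j = b k := by
      have := congrFun hBw k
      rw [Matrix.mulVec, dotProduct] at this
      exact this
    simp only [h1, h2]
    rw [Finset.sum_neg_distrib, h3, add_neg_cancel]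
  -- v ⬝ᵥ A v = s
  have hvAv : v ⬝ᵥ A.mulVec v = s := by
    rw [dotProduct, Fin.sum_univ_succAbove _ i]
    simp [hvi, hAvi, hAvs]
  have hvne : v ≠ 0 := by
    intro h
    have := congrFun h i
    rw [hvi] at this
    simp at this
  have hs0 : 0 < s := by
    have := hA.dotProduct_mulVec_pos hvne
    rw [← hvAv]
    simpa using this
  set nv : ℝ := v ⬝ᵥ v with hnv
  have hnv1 : 1 ≤ nv := by
    rw [hnv, dotProduct, Fin.sum_univ_succAbove _ i, hvi]
    have : (0:ℝ) ≤ ∑ j, v (i.succAbove j) * v (i.succAbove j) :=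
      Finset.sum_nonneg fun j _ => mul_self_nonneg _
    linarith
  have hnv0 : 0 < nv := lt_of_lt_of_le one_pos hnv1
  -- inverse of A
  set P : Fin (n + 1) → Fin (n + 1) → ℝ := i.insertNth 0 (fun k' => i.insertNth 0 (C k')) with hP
  set M : Matrix (Fin (n + 1)) (Fin (n + 1)) ℝ :=
    Matrix.of (fun k l => s⁻¹ * v k * v l + P k l) with hM
  have hPi : ∀ l, P i l = 0 := fun l => by rw [hP, Fin.insertNth_apply_same]; rfl
  have hPs : ∀ k', P (i.succAbove k') = i.insertNth 0 (C k') := fun k' =>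
    Fin.insertNth_apply_succAbove i 0 _ k'
  have hPsi : ∀ k', P (i.succAbove k') i = 0 := fun k' => by
    rw [hPs, Fin.insertNth_apply_same]
  have hPss : ∀ k' l', P (i.succAbove k') (i.succAbove l') = C k' l' := fun k' l' => by
    rw [hPs, Fin.insertNth_apply_succAbove]
  have hBsymm : Bᵀ = B := by
    rw [hB]; ext k l; exact hAsymm _ _
  have hCsymm : Cᵀ = C := by
    rw [hC, Matrix.transpose_nonsing_inv, hBsymm]
  have hCw : ∀ l', ∑ j, b j * C j l' = w l' := by
    intro l'
    have : Cᵀ.mulVec b = w := by rw [hCsymm, hw]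
    have h := congrFun this l'
    rw [Matrix.mulVec, dotProduct] at h
    rw [← h]
    exact Finset.sum_congr rfl fun j _ => by rw [Matrix.transpose_apply, mul_comm]
  have expand : ∀ k l, (A * M) k l
      = s⁻¹ * (A.mulVec v) k * v l + ∑ j, A k (i.succAbove j) * P (i.succAbove j) l := by
    intro k l
    rw [Matrix.mul_apply]
    have h0 : ∀ m, A k m * M m l = A k m * (s⁻¹ * v m * v l) + A k m * P m l := fun m => by
      simp only [hM, Matrix.of_apply]; ring
    rw [Finset.sum_congr rfl (fun m _ => h0 m), Finset.sum_add_distrib]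
    congr 1
    · rw [Matrix.mulVec, dotProduct, Finset.mul_sum, Finset.sum_mul]
      exact Finset.sum_congr rfl fun m _ => by ring
    · rw [Fin.sum_univ_succAbove _ i, hPi, mul_zero, zero_add]
  have hAM : A * M = 1 := by
    ext k l
    rw [expand]
    by_cases hl : l = i
    · rw [hl]
      simp only [hPsi, mul_zero, Finset.sum_const_zero, add_zero, hvi, mul_one]
      by_cases hk : k = i
      · rw [hk, hAvi, Matrix.one_apply_eq, inv_mul_cancel₀ hs0.ne']
      · obtain ⟨k', rfl⟩ := Fin.exists_succAbove_eq (show k ≠ i from hk)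
        rw [hAvs, Matrix.one_apply_ne hk, mul_zero]
    · obtain ⟨l', rfl⟩ := Fin.exists_succAbove_eq (show l ≠ i from hl)
      simp only [hPss, hvs]
      by_cases hk : k = i
      · rw [hk, hAvi, inv_mul_cancel₀ hs0.ne', one_mul, hCw,
          Matrix.one_apply_ne (Fin.succAbove_ne i l').symm, neg_add_cancel]
      · obtain ⟨k', rfl⟩ := Fin.exists_succAbove_eq (show k ≠ i from hk)
        rw [hAvs, mul_zero, zero_mul, zero_add]
        have hBCe : ∑ j, A (i.succAbove k') (i.succAbove j) * C j l' = (B * C) k' l' := by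
          rw [Matrix.mul_apply]
          exact Finset.sum_congr rfl fun j _ => by rw [hB]; rfl
        rw [hBCe, hBC]
        simp [Matrix.one_apply, Fin.succAbove_right_injective.eq_iff]
  have hAinv : A⁻¹ = M := Matrix.inv_eq_right_inv hAM
  have hnveq : nv = 1 + ∑ j, w j * w j := by
    rw [hnv, dotProduct, Fin.sum_univ_succAbove _ i, hvi]
    simp [hvs]
  have htr : A⁻¹.trace = s⁻¹ * nv + C.trace := by
    rw [hAinv, Matrix.trace, Matrix.trace, Fin.sum_univ_succAbove _ i]
    simp only [Matrix.diag_apply, hM, Matrix.of_apply, hPi, hPsi, hPss, hvi, hvs, Pi.zero_apply]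
    rw [hnveq, Finset.sum_add_distrib, mul_add, mul_one, Finset.mul_sum]
    have he : ∀ j ∈ Finset.univ, s⁻¹ * -w j * -w j = s⁻¹ * (w j * w j) :=
      fun j _ => by ring
    rw [Finset.sum_congr rfl he]
    ring
  have hdiff : A⁻¹.trace - B⁻¹.trace = s⁻¹ * nv := by
    rw [htr, ← hC]; ring
  rw [hdiff]
  have hray : (⨅ j, hHerm.eigenvalues j) * nv ≤ s := by
    rw [← hvAv]; exact rayleigh_min hHerm v
  have h1 : 1 / (s⁻¹ * nv) = s / nv := by
    rw [one_div, mul_inv, inv_inv, div_eq_mul_inv]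
  rw [h1]
  exact (le_div_iff₀ hnv0).mpr hray
end

section
/- Let A be an n×n real symmetric matrix all of whose eigenvalues lie in the open interval (−2, ∞). Then for any principal submatrix B obtained from A by deleting one row and corresponding column, all eigenvalues of 2I + B are positive, and tr((2I_n + A)⁻¹) − tr((2I_{n−1} + B)⁻¹) > 0, and the smallest eigenvalue μ of 2I + A satisfies 1/tr((2I_n + A)⁻¹) ≤ μ ≤ 1/(tr((2I_n + A)⁻¹) − tr((2I_{n−1} + B)⁻¹)). -/
open Matrix
open Matrix

private lemma sum_range_eq {l m : Type*} [Fintype l] [Fintype m] [DecidableEq m]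
    {f : l → m} (hf : Function.Injective f)
    (g : m → ℝ) (h0 : ∀ a, (∀ j, f j ≠ a) → g a = 0) : ∑ a, g a = ∑ j, g (f j) := by
  rw [← Finset.sum_image (f := g) (g := f) (fun x _ y _ h => hf h)]
  refine (Finset.sum_subset (Finset.subset_univ _) ?_).symm
  intro a _ ha
  refine h0 a fun j hj => ha ?_
  exact Finset.mem_image.mpr ⟨j, Finset.mem_univ j, hj⟩

private lemma posDef_submatrix_inj {l m : Type*} [Fintype l] [Fintype m] [DecidableEq l]
    [DecidableEq m] {M : Matrix m m ℝ} (hM : M.PosDef) {f : l → m}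
    (hf : Function.Injective f) : (M.submatrix f f).PosDef := by
  refine Matrix.PosDef.of_dotProduct_mulVec_pos (hM.1.submatrix f) fun x hx => ?_
  set y : m → ℝ := Function.extend f x 0 with hy
  have hyf : ∀ j, y (f j) = x j := fun j => hf.extend_apply x 0 j
  have hy0' : ∀ a, (∀ j, f j ≠ a) → y a = 0 := by
    intro a ha
    rw [hy, Function.extend_apply' _ _ _ (by simpa using ha)]
    rfl
  have hy0 : y ≠ 0 := fun h => hx (funext fun j => by
    have := congrFun h (f j); rw [hyf j] at this; simpa using this)
  have h := hM.dotProduct_mulVec_pos hy0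
  simp only [star_trivial] at h ⊢
  have key : y ⬝ᵥ M *ᵥ y = x ⬝ᵥ (M.submatrix f f) *ᵥ x := by
    simp only [dotProduct, mulVec, dotProduct, submatrix_apply]
    rw [sum_range_eq hf _ (fun a ha => by rw [hy0' a ha, zero_mul])]
    refine Finset.sum_congr rfl fun j _ => ?_
    rw [hyf]
    congr 1
    rw [sum_range_eq hf _ (fun b hb => by rw [hy0' b hb, mul_zero])]
    exact Finset.sum_congr rfl fun k _ => by rw [hyf]
  rw [key] at h
  exact h

private lemma quad_submatrix_equiv {l m : Type*} [Fintype l] [Fintype m]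
    (M : Matrix m m ℝ) (e : l ≃ m) (z : l → ℝ) :
    z ⬝ᵥ (M.submatrix e e) *ᵥ z = (z ∘ e.symm) ⬝ᵥ M *ᵥ (z ∘ e.symm) := by
  simp only [dotProduct, mulVec, dotProduct, submatrix_apply, Function.comp_apply]
  rw [← Equiv.sum_comp e (fun c => z (e.symm c) * ∑ d, M c d * z (e.symm d))]
  refine Finset.sum_congr rfl fun a _ => ?_
  rw [e.symm_apply_apply]
  congr 1
  rw [← Equiv.sum_comp e (fun d => M (e a) d * z (e.symm d))]
  exact Finset.sum_congr rfl fun b _ => by rw [e.symm_apply_apply]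

private lemma spectral_real {m : Type*} [Fintype m] [DecidableEq m]
    {A : Matrix m m ℝ} (hA : A.IsHermitian) :
    ∃ U : Matrix m m ℝ, star U * U = 1 ∧ U * star U = 1 ∧
      A = U * diagonal hA.eigenvalues * star U := by
  refine ⟨hA.eigenvectorUnitary, Matrix.mem_unitaryGroup_iff'.mp hA.eigenvectorUnitary.2,
    Matrix.mem_unitaryGroup_iff.mp hA.eigenvectorUnitary.2, ?_⟩
  simpa using hA.spectral_theorem

private lemma rayleigh_le {m : Type*} [Fintype m] [DecidableEq m] [Nonempty m]
    {A : Matrix m m ℝ} (hA : A.IsHermitian) (x : m → ℝ) :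
    (⨅ j, hA.eigenvalues j) * (x ⬝ᵥ x) ≤ x ⬝ᵥ A *ᵥ x := by
  obtain ⟨U, hUU, hUU', hAeq⟩ := spectral_real hA
  have hxy : x ᵥ* U = star U *ᵥ x := by
    rw [star_eq_conjTranspose, conjTranspose_eq_transpose_of_trivial, mulVec_transpose]
  have hq : x ⬝ᵥ A *ᵥ x = ∑ j, hA.eigenvalues j *
      ((star U *ᵥ x) j * (star U *ᵥ x) j) := by
    conv_lhs => rw [hAeq]
    rw [Matrix.mul_assoc, ← mulVec_mulVec, dotProduct_mulVec, hxy, ← mulVec_mulVec]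
    simp only [mulVec_diagonal, dotProduct]
    exact Finset.sum_congr rfl fun j _ => by ring
  have hnorm : (star U *ᵥ x) ⬝ᵥ (star U *ᵥ x) = x ⬝ᵥ x := by
    nth_rewrite 1 [← hxy]
    rw [← dotProduct_mulVec, mulVec_mulVec, hUU', one_mulVec]
  rw [hq, ← hnorm, dotProduct, Finset.mul_sum]
  refine Finset.sum_le_sum fun j _ => ?_
  have h1 : (⨅ j, hA.eigenvalues j) ≤ hA.eigenvalues j :=
    ciInf_le (Finite.bddBelow_range _) j
  have h2 : 0 ≤ (star U *ᵥ x) j * (star U *ᵥ x) j := mul_self_nonneg _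
  nlinarith

private lemma trace_inv_eq {m : Type*} [Fintype m] [DecidableEq m]
    {M : Matrix m m ℝ} (hM : M.PosDef) :
    M⁻¹.trace = ∑ j, (hM.1.eigenvalues j)⁻¹ := by
  obtain ⟨U, hUU, hUU', hMeq⟩ := spectral_real hM.1
  have hsu : (star U)⁻¹ = U := inv_eq_right_inv hUU
  have hu : U⁻¹ = star U := inv_eq_right_inv hUU'
  have h : M⁻¹ = U * (diagonal hM.1.eigenvalues)⁻¹ * star U := by
    conv_lhs => rw [hMeq]
    rw [Matrix.mul_inv_rev, Matrix.mul_inv_rev, hsu, hu, Matrix.mul_assoc]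
  have hev0 : ∀ j, hM.1.eigenvalues j ≠ 0 := fun j => (hM.eigenvalues_pos j).ne'
  have hdinv : (diagonal hM.1.eigenvalues)⁻¹ = diagonal (fun j => (hM.1.eigenvalues j)⁻¹) := by
    refine inv_eq_right_inv ?_
    have hfun : (fun j => hM.1.eigenvalues j * (hM.1.eigenvalues j)⁻¹) = fun _ => 1 :=
      funext fun j => mul_inv_cancel₀ (hev0 j)
    rw [diagonal_mul_diagonal, hfun, diagonal_one]
  rw [h, Matrix.trace_mul_cycle, hUU, Matrix.one_mul, hdinv, trace_diagonal]


/-- Let `A` be real symmetric with all eigenvalues `> -2` and `B` a principal submatrix of `A`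
obtained by deleting one row and the corresponding column. Then `2I + B` is positive definite,
`tr((2I + A)⁻¹) - tr((2I + B)⁻¹) > 0`, and the smallest eigenvalue `μ` of `2I + A` satisfies
`1 / tr((2I + A)⁻¹) ≤ μ ≤ 1 / (tr((2I + A)⁻¹) - tr((2I + B)⁻¹))`. -/
theorem algebraic_connectivity_bounds {n : ℕ}
    (A : Matrix (Fin (n + 1)) (Fin (n + 1)) ℝ) (hA : A.IsHermitian)
    (hev : ∀ j, -2 < hA.eigenvalues j) (i : Fin (n + 1))
    (B : Matrix (Fin n) (Fin n) ℝ) (hB : B = A.submatrix i.succAbove i.succAbove)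
    (h2A : ((2 : ℝ) • (1 : Matrix (Fin (n + 1)) (Fin (n + 1)) ℝ) + A).IsHermitian)
    (μ : ℝ) (hμ : μ = ⨅ j, h2A.eigenvalues j) :
    ((2 : ℝ) • (1 : Matrix (Fin n) (Fin n) ℝ) + B).PosDef ∧
    0 < ((2 : ℝ) • (1 : Matrix (Fin (n + 1)) (Fin (n + 1)) ℝ) + A)⁻¹.trace -
        ((2 : ℝ) • (1 : Matrix (Fin n) (Fin n) ℝ) + B)⁻¹.trace ∧
    1 / ((2 : ℝ) • (1 : Matrix (Fin (n + 1)) (Fin (n + 1)) ℝ) + A)⁻¹.trace ≤ μ ∧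
    μ ≤ 1 / (((2 : ℝ) • (1 : Matrix (Fin (n + 1)) (Fin (n + 1)) ℝ) + A)⁻¹.trace -
        ((2 : ℝ) • (1 : Matrix (Fin n) (Fin n) ℝ) + B)⁻¹.trace) := by
  classical
  set M : Matrix (Fin (n+1)) (Fin (n+1)) ℝ := (2 : ℝ) • 1 + A with hMdef
  set N : Matrix (Fin n) (Fin n) ℝ := (2 : ℝ) • 1 + B with hNdef
  -- M is positive definite
  have hMpd : M.PosDef := by
    refine Matrix.PosDef.of_dotProduct_mulVec_pos h2A fun x hx => ?_
    have hr := rayleigh_le hA x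
    obtain ⟨j0, hj0⟩ := exists_eq_ciInf_of_finite (f := hA.eigenvalues)
    have hgt : (-2 : ℝ) < ⨅ j, hA.eigenvalues j := hj0 ▸ hev j0
    have hxx : 0 < x ⬝ᵥ x := by
      simpa using dotProduct_star_self_pos_iff.mpr hx
    have hquad : x ⬝ᵥ M *ᵥ x = 2 * (x ⬝ᵥ x) + x ⬝ᵥ A *ᵥ x := by
      rw [hMdef, add_mulVec, dotProduct_add, smul_mulVec, one_mulVec, dotProduct_smul]
      simp [smul_eq_mul]
    simp only [star_trivial]
    rw [hquad]
    nlinarith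
  -- part 3: lower bound
  have hevM : ∀ j, 0 < h2A.eigenvalues j := fun j => hMpd.eigenvalues_pos j
  have htr : M⁻¹.trace = ∑ j, (h2A.eigenvalues j)⁻¹ := trace_inv_eq hMpd
  obtain ⟨j0, hj0⟩ := exists_eq_ciInf_of_finite (f := h2A.eigenvalues)
  have hμpos : 0 < μ := by rw [hμ, ← hj0]; exact hevM j0
  have htr_ge : 1 / μ ≤ M⁻¹.trace := by
    rw [htr, hμ, ← hj0, one_div]
    exact Finset.single_le_sum (f := fun j => (h2A.eigenvalues j)⁻¹)
      (fun j _ => (inv_nonneg).mpr (hevM j).le) (Finset.mem_univ j0)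
  have htr_pos : 0 < M⁻¹.trace := lt_of_lt_of_le (by positivity) htr_ge
  have part3 : 1 / M⁻¹.trace ≤ μ := by
    rw [div_le_iff₀ htr_pos]
    have h1 : μ * μ⁻¹ = 1 := mul_inv_cancel₀ hμpos.ne'
    rw [one_div] at htr_ge
    nlinarith [mul_le_mul_of_nonneg_left htr_ge hμpos.le]
  -- N as principal submatrix of M
  have hNs : N = M.submatrix i.succAbove i.succAbove := by
    rw [hNdef, hMdef, hB]
    ext j k
    simp only [submatrix_apply, Matrix.add_apply, Matrix.smul_apply, Matrix.one_apply,
      smul_eq_mul]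
    congr 1
    simp [(Fin.succAbove_right_injective (p := i)).eq_iff]
  have hNpd : N.PosDef := by
    rw [hNs]
    exact posDef_submatrix_inj hMpd Fin.succAbove_right_injective
  -- block decomposition
  have hMsymm : ∀ a b, M a b = M b a := fun a b => by
    have := h2A.apply a b; simpa using this.symm
  set o : Fin (n+1) ≃ (Fin n ⊕ Unit) :=
    (finSuccEquiv' i).trans ((Equiv.optionEquivSumPUnit (Fin n) : Option (Fin n) ≃ Fin n ⊕ Unit)) with ho
  set u : Fin n → ℝ := fun j => M (i.succAbove j) i with hu
  set V : Matrix (Fin n) Unit ℝ := of fun j _ => u j with hV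
  set W : Matrix Unit (Fin n) ℝ := of fun _ j => u j with hW
  set d : Matrix Unit Unit ℝ := of fun _ _ => M i i with hd
  have hM' : M.submatrix o.symm o.symm = fromBlocks N V W d := by
    ext a b
    cases a with
    | inl j =>
      cases b with
      | inl k =>
        show M (i.succAbove j) (i.succAbove k) = N j k
        rw [hNs]; rfl
      | inr p => rfl
    | inr p =>
      cases b with
      | inl k =>
        show M i (i.succAbove k) = u k
        rw [hu, hMsymm]
      | inr p' => rfl
  haveI instN : Invertible N := N.invertibleOfIsUnitDet hNpd.det_pos.ne'.isUnit
  have hNinv : ⅟N = N⁻¹ := invOf_eq_nonsing_inv N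
  have hNNinv : N * N⁻¹ = 1 := Matrix.mul_nonsing_inv N hNpd.det_pos.ne'.isUnit
  have hNinvsymm : ∀ a b, N⁻¹ a b = N⁻¹ b a := fun a b => by
    have := (hNpd.1.inv).apply a b; simpa using this.symm
  set a0 : Fin n → ℝ := N⁻¹ *ᵥ u with ha0
  set p : ℝ := u ⬝ᵥ a0 with hp
  set s : ℝ := M i i - p with hs
  set q : ℝ := a0 ⬝ᵥ a0 with hq
  have hq0 : 0 ≤ q := Finset.sum_nonneg fun j _ => mul_self_nonneg _
  -- the Schur complement is s • 1
  have hS : d - W * ⅟N * V = s • (1 : Matrix Unit Unit ℝ) := by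
    rw [hNinv]
    ext a b
    have hWNV : (W * N⁻¹ * V) a b = p := by
      rw [Matrix.mul_assoc, Matrix.mul_apply]
      simp only [hW, hV, of_apply, Matrix.mul_apply]
      rw [hp, dotProduct, ha0]
      refine Finset.sum_congr rfl fun j _ => ?_
      rw [mulVec]
      simp [dotProduct, Finset.mul_sum]
    rw [Matrix.sub_apply, hWNV, Matrix.smul_apply, Matrix.one_apply,
      if_pos (Subsingleton.elim a b), hd]
    simp [hs]
  -- the witness vector
  set z : (Fin n ⊕ Unit) → ℝ := Sum.elim (-a0) (fun _ => 1) with hz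
  have hz1 : (fromBlocks N V W d) *ᵥ z = Sum.elim (0 : Fin n → ℝ) (fun _ => s) := by
    rw [hz, fromBlocks_mulVec]
    simp only [Sum.elim_comp_inl, Sum.elim_comp_inr]
    have hNa : N *ᵥ (-a0) + V *ᵥ (fun _ => (1:ℝ)) = 0 := by
      rw [mulVec_neg, ha0, mulVec_mulVec, hNNinv, one_mulVec]
      funext j
      simp [hV, mulVec, dotProduct]
    have hWa : W *ᵥ (-a0) + d *ᵥ (fun _ => (1:ℝ)) = fun _ => s := by
      have h1 : W *ᵥ a0 = fun _ => u ⬝ᵥ a0 := by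
        funext pp
        simp [hW, mulVec, dotProduct]
      funext pp
      rw [mulVec_neg]
      simp only [Pi.add_apply, Pi.neg_apply]
      rw [h1]
      have h2 : (d *ᵥ fun _ => (1:ℝ)) pp = M i i := by
        simp [hd, mulVec, dotProduct]
      rw [h2, hs, hp]
      ring
    rw [hNa, hWa]
  have hzMz : z ⬝ᵥ (fromBlocks N V W d) *ᵥ z = s := by
    rw [hz1, hz, sumElim_dotProduct_sumElim]
    simp [dotProduct]
  have hzz : z ⬝ᵥ z = q + 1 := by
    rw [hz, sumElim_dotProduct_sumElim, hq]
    simp [dotProduct]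
  -- pull the witness vector back to `Fin (n+1)`
  have hoi : o i = Sum.inr () := by
    rw [ho]
    simp [Equiv.trans_apply]
  have hx0 : z ∘ o ≠ 0 := by
    intro h
    have := congrFun h i
    rw [Function.comp_apply, hoi] at this
    simp [hz] at this
  have hquad : (z ∘ o) ⬝ᵥ M *ᵥ (z ∘ o) = s := by
    have h := quad_submatrix_equiv M o.symm z
    rw [hM', Equiv.symm_symm] at h
    rw [← h, hzMz]
  have hxx : (z ∘ o) ⬝ᵥ (z ∘ o) = q + 1 := by
    rw [← hzz]
    exact Equiv.sum_comp o (fun a => z a * z a)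
  have hspos : 0 < s := by
    have h := hMpd.dotProduct_mulVec_pos hx0
    simp only [star_trivial] at h
    rwa [hquad] at h
  have hray : μ * (q + 1) ≤ s := by
    have h := rayleigh_le h2A (z ∘ o)
    rw [hquad, hxx, ← hμ] at h
    exact h
  -- inverse via Schur complement
  haveI instS : Invertible (d - W * ⅟N * V) :=
    (d - W * ⅟N * V).invertibleOfIsUnitDet (by
      rw [hS, det_unique]
      simp only [Matrix.smul_apply, Matrix.one_apply_eq, smul_eq_mul, mul_one]
      exact hspos.ne'.isUnit)
  have hinvS : ⅟(d - W * ⅟N * V) = s⁻¹ • (1 : Matrix Unit Unit ℝ) := by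
    refine invOf_eq_right_inv ?_
    rw [hS, smul_mul_assoc, mul_smul_comm, Matrix.one_mul, smul_smul,
      mul_inv_cancel₀ hspos.ne', one_smul]
  haveI instF : Invertible (fromBlocks N V W d) := fromBlocks₁₁Invertible N V W d
  have hFinv : (fromBlocks N V W d)⁻¹ =
      fromBlocks (⅟N + ⅟N * V * ⅟(d - W * ⅟N * V) * W * ⅟N)
        (-(⅟N * V * ⅟(d - W * ⅟N * V))) (-(⅟(d - W * ⅟N * V) * W * ⅟N))
        (⅟(d - W * ⅟N * V)) := by
    rw [← invOf_eq_nonsing_inv, invOf_fromBlocks₁₁_eq]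
  have trace_fb : ∀ (X : Matrix (Fin n) (Fin n) ℝ) (Y : Matrix (Fin n) Unit ℝ)
      (Z : Matrix Unit (Fin n) ℝ) (Wm : Matrix Unit Unit ℝ),
      (fromBlocks X Y Z Wm).trace = X.trace + Wm.trace := by
    intro X Y Z Wm
    rw [Matrix.trace, Matrix.trace, Matrix.trace, Fintype.sum_sum_type]
    rfl
  have trace_unit : ∀ (X : Matrix Unit Unit ℝ), X.trace = X () () := by
    intro X
    rw [Matrix.trace]
    simp [Matrix.diag]
  have hWN : ∀ k, (W * N⁻¹) () k = a0 k := by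
    intro k
    rw [Matrix.mul_apply, ha0]
    simp only [hW, of_apply, mulVec, dotProduct]
    exact Finset.sum_congr rfl fun j _ => by rw [hNinvsymm k j]; ring
  have hNV : ∀ k, (N⁻¹ * V) k () = a0 k := by
    intro k
    rw [Matrix.mul_apply, ha0]
    simp [hV, mulVec, dotProduct]
  have htq : (N⁻¹ * V * W * N⁻¹).trace = q := by
    rw [Matrix.mul_assoc (N⁻¹ * V) W N⁻¹, trace_mul_comm, trace_unit, Matrix.mul_apply, hq]
    rw [dotProduct]
    exact Finset.sum_congr rfl fun k _ => by rw [hWN k, hNV k]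
  have htrF : (fromBlocks N V W d)⁻¹.trace = M⁻¹.trace := by
    rw [← hM', inv_submatrix_equiv M o.symm o.symm, Matrix.trace, Matrix.trace]
    exact Equiv.sum_comp o.symm (fun b => M⁻¹.diag b)
  have htrace_id : M⁻¹.trace = N⁻¹.trace + (s⁻¹ * q + s⁻¹) := by
    rw [← htrF, hFinv, trace_fb, hinvS, hNinv, trace_add, Matrix.mul_smul,
      Matrix.mul_one, Matrix.smul_mul, Matrix.smul_mul, trace_smul, trace_smul, htq, trace_one]
    simp only [smul_eq_mul, Fintype.card_unit, Nat.cast_one, mul_one]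
    ring
  -- conclusion
  have hdiff : M⁻¹.trace - N⁻¹.trace = s⁻¹ * q + s⁻¹ := by rw [htrace_id]; ring
  have hsinv : 0 < s⁻¹ := inv_pos.mpr hspos
  refine ⟨hNpd, ?_, part3, ?_⟩
  · rw [hdiff]
    nlinarith
  · rw [hdiff]
    have h1 : s⁻¹ * q + s⁻¹ = (q + 1) / s := by
      field_simp
    rw [h1, one_div_div, le_div_iff₀ (by positivity : (0:ℝ) < q + 1)]
    exact hray
end
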